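/- arXiv:0909.1366 — 3 statements merged into one kernel-verified Lean document; each statement's English description precedes it below -/
import Mathlib

section
/- For ĥ₁(t) = (2/t) J₁(t) (extended continuously at 0 by 1), and any r > 0, k > 0, and t ∈ [0,1], one has |ĥ₁(k r √(1−t)) − ĥ₁(k r)| ≤ (1/2)(k r/2)² t. -/
open Real

/-- The Bessel function of the first kind of integer order `m`. -/
noncomputable def besselJ (m : ℕ) (t : ℝ) : ℝ :=
  (t / 2) ^ m *
    ∑' n : ℕ, (-1 : ℝ) ^ n / ((Nat.factorial (m + n) : ℝ) * (Nat.factorial n : ℝ)) *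
      (t / 2) ^ (2 * n)

/-- `ĥ₁(t) = (2/t) J₁(t)`, extended continuously at `0` by `1`. -/
noncomputable def hatJ1 (t : ℝ) : ℝ :=
  if t = 0 then 1 else (2 / t) * besselJ 1 t

/-! ### Auxiliary development -/

/-- `∫_{-π/2}^{π/2} sin^{2n}`. -/
noncomputable def sinMoment (n : ℕ) : ℝ := ∫ x in (-(π/2))..(π/2), Real.sin x ^ (2*n)

/-- `∫_{-1}^{1} x^{2n} √(1-x²) dx`. -/
noncomputable def sqrtMoment (n : ℕ) : ℝ :=
  ∫ x in (-1:ℝ)..1, x ^ (2*n) * Real.sqrt (1 - x^2)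

lemma sinMoment_zero : sinMoment 0 = π := by
  simp [sinMoment]

lemma sinMoment_succ (n : ℕ) :
    sinMoment (n+1) = (2*n+1) / (2*n+2) * sinMoment n := by
  have h := integral_sin_pow (a := -(π/2)) (b := π/2) (2*n)
  have h2 : 2*(n+1) = 2*n + 2 := by ring
  rw [sinMoment, h2, h]
  simp only [Real.sin_neg, Real.sin_pi_div_two, Real.cos_pi_div_two, mul_zero, sub_zero,
    neg_neg]
  rw [show Real.cos (-(π/2)) = 0 by rw [Real.cos_neg, Real.cos_pi_div_two]]
  rw [sinMoment]
  push_cast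
  ring

lemma sinMoment_closed (n : ℕ) :
    sinMoment n = π * (Nat.factorial (2*n)) / (4^n * (Nat.factorial n)^2) := by
  induction n with
  | zero => simp [sinMoment_zero]
  | succ n ih =>
    rw [sinMoment_succ, ih]
    have h2 : 2*(n+1) = 2*n + 1 + 1 := by ring
    rw [h2, Nat.factorial_succ, Nat.factorial_succ, Nat.factorial_succ]
    have hf : (Nat.factorial (2*n) : ℝ) ≠ 0 := Nat.cast_ne_zero.2 (Nat.factorial_ne_zero _)
    have hf2 : (Nat.factorial n : ℝ) ≠ 0 := Nat.cast_ne_zero.2 (Nat.factorial_ne_zero _)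
    have h4 : (4:ℝ)^n ≠ 0 := by positivity
    have hn1 : (2*(n:ℝ)+2) ≠ 0 := by positivity
    push_cast
    field_simp
    ring

lemma sqrtMoment_eq (n : ℕ) : sqrtMoment n = sinMoment n - sinMoment (n+1) := by
  have key : (∫ x in (-(π/2))..(π/2), Real.cos x •
      ((fun y : ℝ => y ^ (2*n) * Real.sqrt (1 - y^2)) ∘ Real.sin) x)
      = ∫ y in Real.sin (-(π/2))..Real.sin (π/2), y ^ (2*n) * Real.sqrt (1 - y^2) := by
    apply intervalIntegral.integral_comp_smul_deriv
    · intro x _; exact Real.hasDerivAt_sin x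
    · exact Real.continuous_cos.continuousOn
    · exact (continuous_pow _).mul (Real.continuous_sqrt.comp (by continuity))
  rw [Real.sin_neg, Real.sin_pi_div_two] at key
  have lhs_eq : (∫ x in (-(π/2))..(π/2), Real.cos x •
      ((fun y : ℝ => y ^ (2*n) * Real.sqrt (1 - y^2)) ∘ Real.sin) x)
      = ∫ x in (-(π/2))..(π/2), (Real.sin x ^ (2*n) - Real.sin x ^ (2*(n+1))) := by
    apply intervalIntegral.integral_congr
    intro x hx
    have hx' : x ∈ Set.Icc (-(π/2)) (π/2) := by
      rwa [Set.uIcc_of_le (by linarith [Real.pi_pos])] at hx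
    have hcos : 0 ≤ Real.cos x := Real.cos_nonneg_of_mem_Icc hx'
    have hsq : Real.sqrt (1 - Real.sin x ^ 2) = Real.cos x := by
      rw [← Real.cos_sq']
      exact Real.sqrt_sq hcos
    simp only [Function.comp_apply, smul_eq_mul, hsq]
    have hc : Real.cos x ^ 2 = 1 - Real.sin x ^ 2 := Real.cos_sq' x
    have h2 : 2*(n+1) = 2*n + 2 := by ring
    rw [h2, pow_add]
    have hmul : Real.cos x * (Real.sin x ^ (2*n) * Real.cos x)
        = Real.sin x ^ (2*n) * Real.cos x ^ 2 := by ring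
    rw [hmul, hc]
    ring
  have hsub : (∫ x in (-(π/2))..(π/2), (Real.sin x ^ (2*n) - Real.sin x ^ (2*(n+1))))
      = sinMoment n - sinMoment (n+1) := by
    rw [sinMoment, sinMoment]
    apply intervalIntegral.integral_sub <;>
      exact (Real.continuous_sin.pow _).intervalIntegrable _ _
  rw [sqrtMoment, ← key, lhs_eq, hsub]

lemma sqrtMoment_closed (n : ℕ) :
    sqrtMoment n = π * (Nat.factorial (2*n)) /
      (2 * 4^n * (Nat.factorial n) * (Nat.factorial (n+1))) := by
  rw [sqrtMoment_eq, sinMoment_closed, sinMoment_closed]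
  have h2 : 2*(n+1) = 2*n + 1 + 1 := by ring
  rw [h2, Nat.factorial_succ, Nat.factorial_succ, Nat.factorial_succ]
  have hf : (Nat.factorial (2*n) : ℝ) ≠ 0 := Nat.cast_ne_zero.2 (Nat.factorial_ne_zero _)
  have hf2 : (Nat.factorial n : ℝ) ≠ 0 := Nat.cast_ne_zero.2 (Nat.factorial_ne_zero _)
  have h4 : (4:ℝ)^n ≠ 0 := by positivity
  push_cast
  field_simp
  ring

lemma sqrtMoment_one : sqrtMoment 1 = π / 8 := by
  rw [sqrtMoment_closed]
  norm_num [Nat.factorial]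
  ring

lemma hatJ1_series (a : ℝ) :
    hatJ1 a = ∑' n : ℕ, (-1:ℝ)^n /
      ((Nat.factorial (n+1) : ℝ) * (Nat.factorial n : ℝ)) * (a/2)^(2*n) := by
  by_cases ha : a = 0
  · subst ha
    rw [hatJ1, if_pos rfl]
    rw [tsum_eq_single 0 (by
      intro n hn
      have : 2*n ≠ 0 := by omega
      simp [zero_pow this])]
    simp
  · rw [hatJ1, if_neg ha, besselJ]
    have key : (2/a) * ((a/2)^1 * ∑' n : ℕ, (-1:ℝ)^n /
        ((Nat.factorial (1+n) : ℝ) * (Nat.factorial n : ℝ)) * (a/2)^(2*n))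
        = ∑' n : ℕ, (-1:ℝ)^n /
        ((Nat.factorial (1+n) : ℝ) * (Nat.factorial n : ℝ)) * (a/2)^(2*n) := by
      rw [pow_one, ← mul_assoc]
      field_simp
    rw [key]
    exact tsum_congr fun n => by rw [Nat.add_comm 1 n]

lemma summable_aux (c : ℝ) :
    Summable (fun n : ℕ => c ^ (2*n) / (Nat.factorial (2*n) : ℝ)) := by
  have h := Real.summable_pow_div_factorial c
  exact h.comp_injective (fun x y hxy => by
    simp only [] at hxy; omega : Function.Injective (fun n : ℕ => 2*n))

lemma cos_integral (a : ℝ) :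
    ∫ x in (-1:ℝ)..1, Real.sqrt (1 - x^2) * Real.cos (a*x)
      = ∑' n : ℕ, ((-1:ℝ)^n * a^(2*n) / (Nat.factorial (2*n) : ℝ)) * sqrtMoment n := by
  set c : ℕ → ℝ := fun n => (-1:ℝ)^n * a^(2*n) / (Nat.factorial (2*n) : ℝ) with hc
  set F : ℕ → ℝ → ℝ := fun n x => c n * (x ^ (2*n) * Real.sqrt (1 - x^2)) with hF
  have hFcont : ∀ n, Continuous (F n) := fun n =>
    continuous_const.mul ((continuous_pow _).mul (Real.continuous_sqrt.comp (by continuity)))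
  have hFint : ∀ n, MeasureTheory.IntegrableOn (F n) (Set.Ioc (-1:ℝ) 1) := fun n =>
    (hFcont n).integrableOn_Ioc
  have habs : ∀ n, |c n| ≤ |a|^(2*n) / (Nat.factorial (2*n) : ℝ) := by
    intro n
    rw [hc]
    simp only [abs_div, abs_mul, abs_pow, abs_neg, abs_one, one_pow, one_mul, Nat.abs_cast]
    exact le_refl _
  have hboundpt : ∀ n, ∀ x ∈ Set.Ioc (-1:ℝ) 1,
      ‖F n x‖ ≤ |a|^(2*n) / (Nat.factorial (2*n) : ℝ) := by
    intro n x hx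
    have hx1 : |x| ≤ 1 := abs_le.2 ⟨le_of_lt hx.1, hx.2⟩
    have hs0 : 0 ≤ Real.sqrt (1 - x^2) := Real.sqrt_nonneg _
    have hs1 : Real.sqrt (1 - x^2) ≤ 1 := by
      calc Real.sqrt (1 - x^2) ≤ Real.sqrt 1 :=
            Real.sqrt_le_sqrt (by nlinarith [sq_abs x, abs_nonneg x])
        _ = 1 := Real.sqrt_one
    have h1 : |x ^ (2*n) * Real.sqrt (1 - x^2)| ≤ 1 := by
      rw [abs_mul, abs_pow, abs_of_nonneg hs0]
      exact mul_le_one₀ (pow_le_one₀ (abs_nonneg x) hx1) hs0 hs1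
    calc ‖F n x‖ = |c n| * |x ^ (2*n) * Real.sqrt (1 - x^2)| := by
          rw [hF]; exact abs_mul _ _
      _ ≤ |c n| * 1 := by
          exact mul_le_mul_of_nonneg_left h1 (abs_nonneg _)
      _ ≤ |a|^(2*n) / (Nat.factorial (2*n) : ℝ) := by rw [mul_one]; exact habs n
  have hIocvol : (MeasureTheory.volume (Set.Ioc (-1:ℝ) 1)).toReal = 2 := by
    rw [Real.volume_Ioc]
    rw [ENNReal.toReal_ofReal (by norm_num)]
    norm_num
  have hbound : ∀ n, (∫ x in Set.Ioc (-1:ℝ) 1, ‖F n x‖)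
      ≤ 2 * (|a|^(2*n) / (Nat.factorial (2*n) : ℝ)) := by
    intro n
    calc (∫ x in Set.Ioc (-1:ℝ) 1, ‖F n x‖)
        ≤ ∫ _x in Set.Ioc (-1:ℝ) 1, (|a|^(2*n) / (Nat.factorial (2*n) : ℝ)) := by
          apply MeasureTheory.setIntegral_mono_on
          · exact (hFint n).norm
          · exact MeasureTheory.integrableOn_const (by simp) (by simp)
          · exact measurableSet_Ioc
          · exact hboundpt n
      _ = 2 * (|a|^(2*n) / (Nat.factorial (2*n) : ℝ)) := by
          rw [MeasureTheory.setIntegral_const, MeasureTheory.measureReal_def, hIocvol, smul_eq_mul]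
  have hsummable : Summable (fun n => ∫ x in Set.Ioc (-1:ℝ) 1, ‖F n x‖) := by
    apply Summable.of_nonneg_of_le
      (fun n => MeasureTheory.integral_nonneg (fun x => norm_nonneg _)) hbound
    exact (summable_aux |a|).mul_left 2
  have hswap := MeasureTheory.integral_tsum_of_summable_integral_norm
    (μ := MeasureTheory.volume.restrict (Set.Ioc (-1:ℝ) 1)) (F := F)
    (fun n => hFint n) hsummable
  have hptwise : ∀ x : ℝ, Real.sqrt (1 - x^2) * Real.cos (a*x) = ∑' n, F n x := by
    intro x
    rw [Real.cos_eq_tsum, ← tsum_mul_left]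
    exact tsum_congr fun n => by rw [hF, hc]; simp only [mul_pow]; ring
  calc ∫ x in (-1:ℝ)..1, Real.sqrt (1 - x^2) * Real.cos (a*x)
      = ∫ x in Set.Ioc (-1:ℝ) 1, Real.sqrt (1 - x^2) * Real.cos (a*x) :=
        intervalIntegral.integral_of_le (by norm_num)
    _ = ∫ x in Set.Ioc (-1:ℝ) 1, ∑' n, F n x := by
        congr 1; funext x; exact hptwise x
    _ = ∑' n, ∫ x in Set.Ioc (-1:ℝ) 1, F n x := hswap.symm
    _ = ∑' n : ℕ, c n * sqrtMoment n := by
        apply tsum_congr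
        intro n
        rw [← intervalIntegral.integral_of_le (by norm_num : (-1:ℝ) ≤ 1)]
        rw [sqrtMoment, ← intervalIntegral.integral_const_mul]

lemma hatJ1_repr (a : ℝ) :
    hatJ1 a = (2/π) * ∫ x in (-1:ℝ)..1, Real.sqrt (1 - x^2) * Real.cos (a*x) := by
  rw [cos_integral, hatJ1_series, ← tsum_mul_left]
  apply tsum_congr
  intro n
  rw [sqrtMoment_closed]
  have hf : (Nat.factorial (2*n) : ℝ) ≠ 0 := Nat.cast_ne_zero.2 (Nat.factorial_ne_zero _)
  have hf2 : (Nat.factorial n : ℝ) ≠ 0 := Nat.cast_ne_zero.2 (Nat.factorial_ne_zero _)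
  have hf3 : (Nat.factorial (n+1) : ℝ) ≠ 0 := Nat.cast_ne_zero.2 (Nat.factorial_ne_zero _)
  have hpi : (π:ℝ) ≠ 0 := Real.pi_ne_zero
  have h4 : ((4:ℝ)^n) ≠ 0 := by positivity
  have hpow : (a/2)^(2*n) = a^(2*n) / 4^n := by
    rw [div_pow]
    congr 1
    rw [show (4:ℝ)^n = (2^2)^n by norm_num, ← pow_mul]
  rw [hpow]
  field_simp

lemma abs_cos_sub_cos_le (p q : ℝ) :
    |Real.cos p - Real.cos q| ≤ |p^2 - q^2| / 2 := by
  rw [Real.cos_sub_cos]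
  have h1 : |Real.sin ((p+q)/2)| ≤ |(p+q)/2| := Real.abs_sin_le_abs
  have h2 : |Real.sin ((p-q)/2)| ≤ |(p-q)/2| := Real.abs_sin_le_abs
  calc |(-2) * Real.sin ((p+q)/2) * Real.sin ((p-q)/2)|
      = 2 * (|Real.sin ((p+q)/2)| * |Real.sin ((p-q)/2)|) := by
        rw [abs_mul, abs_mul]
        norm_num [mul_assoc]
    _ ≤ 2 * (|(p+q)/2| * |(p-q)/2|) := by
        apply mul_le_mul_of_nonneg_left _ (by norm_num)
        exact mul_le_mul h1 h2 (abs_nonneg _) (abs_nonneg _)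
    _ = |p^2 - q^2| / 2 := by
        rw [← abs_mul]
        rw [show (p+q)/2 * ((p-q)/2) = (p^2-q^2)/4 by ring]
        rw [abs_div]
        norm_num
        ring

theorem hatJ1_difference_bound (k r : ℝ) (hk : 0 < k) (hr : 0 < r)
    (t : ℝ) (ht0 : 0 ≤ t) (ht1 : t ≤ 1) :
    |hatJ1 (k * r * Real.sqrt (1 - t)) - hatJ1 (k * r)| ≤ (1 / 2) * (k * r / 2) ^ 2 * t := by
  set b : ℝ := k * r with hb
  set a : ℝ := k * r * Real.sqrt (1 - t) with ha
  have hb0 : 0 < b := mul_pos hk hr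
  have ht' : 0 ≤ 1 - t := by linarith
  have hasq : a^2 = b^2 * (1 - t) := by
    rw [ha, hb, mul_pow, Real.sq_sqrt ht']
  have hab : a^2 ≤ b^2 := by nlinarith [sq_nonneg b]
  have hcont : ∀ c : ℝ, Continuous (fun x : ℝ => Real.sqrt (1 - x^2) * Real.cos (c*x)) := by
    intro c
    exact (Real.continuous_sqrt.comp (by continuity)).mul
      (Real.continuous_cos.comp (continuous_const.mul continuous_id))
  have hcont2 : Continuous
      (fun x : ℝ => Real.sqrt (1 - x^2) * (Real.cos (a*x) - Real.cos (b*x))) := by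
    exact (Real.continuous_sqrt.comp (by continuity)).mul
      ((Real.continuous_cos.comp (continuous_const.mul continuous_id)).sub
        (Real.continuous_cos.comp (continuous_const.mul continuous_id)))
  have key : hatJ1 a - hatJ1 b
      = (2/π) * ∫ x in (-1:ℝ)..1,
          Real.sqrt (1 - x^2) * (Real.cos (a*x) - Real.cos (b*x)) := by
    rw [hatJ1_repr a, hatJ1_repr b, ← mul_sub]
    congr 1
    rw [← intervalIntegral.integral_sub ((hcont a).intervalIntegrable _ _)
      ((hcont b).intervalIntegrable _ _)]
    congr 1; funext x; ring
  have hintbound : |∫ x in (-1:ℝ)..1,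
      Real.sqrt (1 - x^2) * (Real.cos (a*x) - Real.cos (b*x))|
      ≤ (b^2 - a^2)/2 * sqrtMoment 1 := by
    calc |∫ x in (-1:ℝ)..1, Real.sqrt (1 - x^2) * (Real.cos (a*x) - Real.cos (b*x))|
        ≤ ∫ x in (-1:ℝ)..1, |Real.sqrt (1 - x^2) * (Real.cos (a*x) - Real.cos (b*x))| :=
          intervalIntegral.abs_integral_le_integral_abs (by norm_num)
      _ ≤ ∫ x in (-1:ℝ)..1, (b^2 - a^2)/2 * (x^(2*1) * Real.sqrt (1 - x^2)) := by
          apply intervalIntegral.integral_mono_on (by norm_num)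
          · exact hcont2.abs.intervalIntegrable _ _
          · exact (continuous_const.mul ((continuous_pow _).mul
              (Real.continuous_sqrt.comp (by continuity)))).intervalIntegrable _ _
          · intro x hx
            have hs0 : 0 ≤ Real.sqrt (1 - x^2) := Real.sqrt_nonneg _
            have hcc := _root_.abs_cos_sub_cos_le (a*x) (b*x)
            have habsx : |(a*x)^2 - (b*x)^2| = x^2 * (b^2 - a^2) := by
              rw [show (a*x)^2 - (b*x)^2 = -(x^2*(b^2-a^2)) by ring, abs_neg,
                abs_of_nonneg (by nlinarith [sq_nonneg x])]
            calc |Real.sqrt (1 - x^2) * (Real.cos (a*x) - Real.cos (b*x))|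
                = Real.sqrt (1 - x^2) * |Real.cos (a*x) - Real.cos (b*x)| := by
                  rw [abs_mul, abs_of_nonneg hs0]
              _ ≤ Real.sqrt (1 - x^2) * (|(a*x)^2 - (b*x)^2|/2) :=
                  mul_le_mul_of_nonneg_left (by linarith [hcc]) hs0
              _ = (b^2 - a^2)/2 * (x^(2*1) * Real.sqrt (1 - x^2)) := by
                  rw [habsx]; ring
      _ = (b^2 - a^2)/2 * sqrtMoment 1 := by
          rw [sqrtMoment, intervalIntegral.integral_const_mul]
  have hpi : (0:ℝ) < π := Real.pi_pos
  have hfinal : |hatJ1 a - hatJ1 b| ≤ (2/π) * ((b^2 - a^2)/2 * sqrtMoment 1) := by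
    rw [key, abs_mul, abs_of_nonneg (by positivity : (0:ℝ) ≤ 2/π)]
    exact mul_le_mul_of_nonneg_left hintbound (by positivity)
  rw [sqrtMoment_one] at hfinal
  have hba : b^2 - a^2 = b^2 * t := by rw [hasq]; ring
  calc |hatJ1 a - hatJ1 b| ≤ (2/π) * ((b^2 - a^2)/2 * (π/8)) := hfinal
    _ = (1/2) * (b/2)^2 * t := by
        rw [hba]; field_simp; ring
end

section
/- For n ≥ 1, N ≥ 1 and z ∈ ℂ, the tail of the Mittag-Leffler series satisfies |E_{1/n}(z) − E_{1/n}^{nN}(z)| ≤ ∑_{l=1}^n |z|^{nN+l}/Γ(N+1+l/n) · e^{|Re(z^n)|}, where E_{1/n}^{nN}(z) = ∑_{m=0}^{nN} z^m/Γ(m/n+1). -/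
open Real Finset MeasureTheory intervalIntegral

lemma Gamma_mul_fact_le (a : ℝ) (ha : 1 ≤ a) (k : ℕ) :
    Real.Gamma a * k.factorial ≤ Real.Gamma (a + k) := by
  induction k with
  | zero => simp
  | succ k ih =>
    have hpos : 0 < Real.Gamma a := Real.Gamma_pos_of_pos (by linarith)
    have hne : a + (k:ℝ) ≠ 0 := by positivity
    have h1 : Real.Gamma (a + (k+1:ℕ)) = (a + k) * Real.Gamma (a + k) := by
      push_cast
      rw [show a + ((k:ℝ)+1) = (a + k) + 1 by ring, Real.Gamma_add_one hne]
    have h2 : ((k:ℝ)+1) * (Real.Gamma a * k.factorial) ≤ (a+k) * Real.Gamma (a+k) := by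
      apply mul_le_mul (by linarith) ih (by positivity) (by linarith [Nat.cast_nonneg (α := ℝ) k])
    calc Real.Gamma a * (k+1).factorial = ((k:ℝ)+1) * (Real.Gamma a * k.factorial) := by
          push_cast [Nat.factorial_succ]; ring
      _ ≤ (a+k) * Real.Gamma (a+k) := h2
      _ = Real.Gamma (a + (k+1:ℕ)) := h1.symm

lemma abs_S_term (a : ℝ) (ha : 0 < a) (w : ℂ) (k : ℕ) :
    ‖w ^ k / (Real.Gamma (a + k) : ℂ)‖
      = ‖w‖ ^ k / Real.Gamma (a + k) := by
  have hΓ : 0 < Real.Gamma (a + k) := Real.Gamma_pos_of_pos (by positivity)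
  rw [norm_div, norm_pow, Complex.norm_real, Real.norm_eq_abs, abs_of_pos hΓ]

lemma summable_abs_S (a : ℝ) (ha : 1 ≤ a) (w : ℂ) :
    Summable (fun k : ℕ => ‖w ^ k / (Real.Gamma (a + k) : ℂ)‖) := by
  have hpos : 0 < Real.Gamma a := Real.Gamma_pos_of_pos (by linarith)
  refine Summable.of_nonneg_of_le (fun k => by positivity)
    (f := fun k => (Real.Gamma a)⁻¹ * (‖w‖ ^ k / k.factorial)) ?_ ?_
  · intro k
    have hfac : (0:ℝ) < k.factorial := by positivity
    rw [abs_S_term a (by linarith) w k]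
    have h1 : ‖w‖ ^ k / Real.Gamma (a + k)
        ≤ ‖w‖ ^ k / (Real.Gamma a * k.factorial) :=
      div_le_div_of_nonneg_left (by positivity) (by positivity) (Gamma_mul_fact_le a ha k)
    calc ‖w‖ ^ k / Real.Gamma (a + k)
        ≤ ‖w‖ ^ k / (Real.Gamma a * k.factorial) := h1
      _ = (Real.Gamma a)⁻¹ * (‖w‖ ^ k / k.factorial) := by
          field_simp
  · exact (Real.summable_pow_div_factorial _).mul_left _

lemma summable_S (a : ℝ) (ha : 1 ≤ a) (w : ℂ) :
    Summable (fun k : ℕ => w ^ k / (Real.Gamma (a + k) : ℂ)) := by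
  apply Summable.of_norm
  simpa using summable_abs_S a ha w

lemma beta_step (a : ℝ) (ha : 2 ≤ a) (k : ℕ) :
    ∫ x in (0:ℝ)..1, ((x ^ (a-2) * (1-x)^k : ℝ) : ℂ)
      = (Real.Gamma (a-1) * k.factorial / Real.Gamma (a + k) : ℝ) := by
  have h1 : ∫ x in (0:ℝ)..1, ((x ^ (a-2) * (1-x)^k : ℝ) : ℂ)
      = Complex.betaIntegral ((a-1 : ℝ) : ℂ) ((k:ℂ)+1) := by
    rw [Complex.betaIntegral]
    apply intervalIntegral.integral_congr
    intro x hx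
    simp only [Set.uIcc_of_le (by norm_num : (0:ℝ) ≤ 1), Set.mem_Icc] at hx
    push_cast
    rw [show ((a:ℂ)-1-1) = ((a-2:ℝ):ℂ) by push_cast; ring,
      show ((k:ℂ)+1-1) = ((k:ℕ):ℂ) by ring, Complex.cpow_natCast,
      ← Complex.ofReal_cpow hx.1]
  have hre1 : (0:ℝ) < ((a-1:ℝ):ℂ).re := by simp; linarith
  have hre2 : (0:ℝ) < ((k:ℂ)+1).re := by simp; positivity
  have h2 := Complex.Gamma_mul_Gamma_eq_betaIntegral hre1 hre2
  have hsum : ((a-1:ℝ):ℂ) + ((k:ℂ)+1) = ((a+k:ℝ):ℂ) := by push_cast; ring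
  rw [hsum] at h2
  have hΓsum : Complex.Gamma ((a+k:ℝ):ℂ) = (Real.Gamma (a+k) : ℂ) := Complex.Gamma_ofReal _
  have hΓ1 : Complex.Gamma ((a-1:ℝ):ℂ) = (Real.Gamma (a-1) : ℂ) := Complex.Gamma_ofReal _
  have hΓ2 : Complex.Gamma ((k:ℂ)+1) = (k.factorial : ℂ) := by
    simpa using Complex.Gamma_nat_eq_factorial k
  have hne : (Real.Gamma (a+k) : ℂ) ≠ 0 := by
    simp only [ne_eq, Complex.ofReal_eq_zero]
    exact (Real.Gamma_pos_of_pos (by positivity)).ne'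
  rw [h1]
  rw [hΓ1, hΓ2, hΓsum] at h2
  push_cast at h2 hne ⊢
  rw [eq_div_iff hne]
  linear_combination -h2

lemma cont_aux (a : ℝ) (ha : 2 ≤ a) (k : ℕ) :
    Continuous (fun x : ℝ => x ^ (a-2) * (1-x)^k) := by
  have h1 : Continuous (fun x : ℝ => x ^ (a-2)) := by
    apply continuous_iff_continuousAt.mpr
    intro x
    exact Real.continuousAt_rpow_const x (a-2) (Or.inr (by linarith))
  exact h1.mul ((continuous_const.sub continuous_id).pow k)

lemma S_repr (a : ℝ) (ha : 2 ≤ a) (w : ℂ)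
    (hbeta : ∀ k : ℕ, ∫ x in (0:ℝ)..1, ((x ^ (a-2) * (1-x)^k : ℝ) : ℂ)
      = (Real.Gamma (a-1) * k.factorial / Real.Gamma (a + k) : ℝ)) :
    HasSum (fun k : ℕ => (Real.Gamma (a-1) : ℂ) * (w ^ k / (Real.Gamma (a + k) : ℂ)))
      (∫ x in (0:ℝ)..1, ((x ^ (a-2) : ℝ) : ℂ) * Complex.exp (w * (1 - x))) := by
  set μ := volume.restrict (Set.Ioc (0:ℝ) 1) with hμ
  set F : ℕ → ℝ → ℂ := fun k x => (w^k / k.factorial) * ((x ^ (a-2) * (1-x)^k : ℝ) : ℂ) with hF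
  have hcont : ∀ k, Continuous (F k) := fun k =>
    continuous_const.mul (Complex.continuous_ofReal.comp (cont_aux a ha k))
  have hint : ∀ k, Integrable (F k) μ := fun k => (hcont k).integrableOn_Ioc
  -- pointwise tsum identity
  have htsum : ∀ x : ℝ, ∑' k, F k x = ((x ^ (a-2) : ℝ) : ℂ) * Complex.exp (w * (1 - x)) := by
    intro x
    have hFx : ∀ k, F k x = ((x ^ (a-2) : ℝ) : ℂ) * ((w * (1 - (x:ℂ)))^k / k.factorial) := by
      intro k
      simp only [hF]
      push_cast
      rw [mul_pow]
      ring
    have hexp : Complex.exp (w * (1 - (x:ℂ))) = ∑' k : ℕ, (w * (1 - (x:ℂ)))^k / k.factorial := by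
      rw [Complex.exp_eq_exp_ℂ, NormedSpace.exp_eq_tsum_div]
    simp only [hFx]
    rw [tsum_mul_left, hexp]
  -- norm bound
  have hnorm : ∀ k, (∫ x, ‖F k x‖ ∂μ) ≤ ‖w‖ ^ k / k.factorial := by
    intro k
    have hb : ∀ x ∈ Set.Ioc (0:ℝ) 1, ‖F k x‖ ≤ ‖w‖ ^ k / k.factorial := by
      intro x hx
      rw [hF]
      rw [norm_mul, Complex.norm_real, Real.norm_eq_abs]
      have hx1 : (0:ℝ) ≤ 1 - x := by linarith [hx.2]
      have h1 : |x ^ (a-2) * (1-x)^k| ≤ 1 := by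
        rw [abs_of_nonneg (mul_nonneg (Real.rpow_nonneg hx.1.le _) (pow_nonneg hx1 k))]
        exact mul_le_one₀ (Real.rpow_le_one hx.1.le hx.2 (by linarith))
          (pow_nonneg hx1 k) (pow_le_one₀ hx1 (by linarith [hx.1.le]))
      have h2 : ‖w^k / (k.factorial:ℂ)‖ = ‖w‖ ^ k / k.factorial := by
        rw [norm_div, norm_pow]
        simp [Complex.norm_natCast]
      calc ‖w ^ k / (k.factorial:ℂ)‖ * |x ^ (a-2) * (1-x)^k|
          ≤ ‖w ^ k / (k.factorial:ℂ)‖ * 1 :=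
            mul_le_mul_of_nonneg_left h1 (by positivity)
        _ = ‖w‖ ^ k / k.factorial := by rw [mul_one, h2]
    calc (∫ x, ‖F k x‖ ∂μ) ≤ ∫ _x, ‖w‖ ^ k / k.factorial ∂μ := by
          apply integral_mono_of_nonneg
          · exact Filter.Eventually.of_forall fun x => norm_nonneg _
          · exact integrable_const _
          · rw [hμ]
            exact (ae_restrict_iff' measurableSet_Ioc).mpr (Filter.Eventually.of_forall hb)
      _ = ‖w‖ ^ k / k.factorial := by
          rw [MeasureTheory.integral_const]
          simp [hμ, Real.volume_Ioc]
  have hsummable : Summable (fun k => ∫ x, ‖F k x‖ ∂μ) := by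
    refine Summable.of_nonneg_of_le (fun k => integral_nonneg fun x => norm_nonneg _)
      hnorm (Real.summable_pow_div_factorial _)
  have H := hasSum_integral_of_summable_integral_norm hint hsummable
  -- identify the integrals
  have hI : (∫ x, ∑' k, F k x ∂μ) = ∫ x in (0:ℝ)..1, ((x ^ (a-2) : ℝ) : ℂ) * Complex.exp (w * (1 - x)) := by
    rw [intervalIntegral.integral_of_le (by norm_num : (0:ℝ) ≤ 1), hμ]
    exact integral_congr_ae (Filter.Eventually.of_forall fun x => htsum x)
  have hterm : ∀ k, (∫ x, F k x ∂μ) = (Real.Gamma (a-1) : ℂ) * (w ^ k / (Real.Gamma (a + k) : ℂ)) := by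
    intro k
    have h0 : (∫ x, F k x ∂μ) = ∫ x in (0:ℝ)..1, F k x := by
      rw [intervalIntegral.integral_of_le (by norm_num : (0:ℝ) ≤ 1), hμ]
    rw [h0, hF]
    simp only
    rw [intervalIntegral.integral_const_mul, hbeta k]
    have hΓ : (0:ℝ) < Real.Gamma (a+k) := Real.Gamma_pos_of_pos (by positivity)
    have hfac : ((k.factorial : ℂ)) ≠ 0 := by exact_mod_cast k.factorial_ne_zero
    have hΓne : ((Real.Gamma (a+(k:ℝ)) : ℂ)) ≠ 0 := by
      exact_mod_cast hΓ.ne'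
    push_cast
    field_simp
  rw [hI] at H
  rwa [funext hterm] at H

lemma S_bound (a : ℝ) (ha : 2 ≤ a) (w : ℂ)
    (hrepr : HasSum (fun k : ℕ => (Real.Gamma (a-1) : ℂ) * (w ^ k / (Real.Gamma (a + k) : ℂ)))
      (∫ x in (0:ℝ)..1, ((x ^ (a-2) : ℝ) : ℂ) * Complex.exp (w * (1 - x)))) :
    ‖∑' k : ℕ, w ^ k / (Real.Gamma (a + k) : ℂ)‖
      ≤ Real.exp |w.re| / Real.Gamma a := by
  set I := ∫ x in (0:ℝ)..1, ((x ^ (a-2) : ℝ) : ℂ) * Complex.exp (w * (1 - x)) with hIdef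
  have hΓ1 : (0:ℝ) < Real.Gamma (a-1) := Real.Gamma_pos_of_pos (by linarith)
  have hcont : Continuous (fun x : ℝ => ((x ^ (a-2) : ℝ) : ℂ) * Complex.exp (w * (1 - x))) := by
    have h1 : Continuous (fun x : ℝ => x ^ (a-2)) := by
      apply continuous_iff_continuousAt.mpr
      exact fun x => Real.continuousAt_rpow_const x (a-2) (Or.inr (by linarith))
    exact (Complex.continuous_ofReal.comp h1).mul
      (Complex.continuous_exp.comp (continuous_const.mul
        (continuous_const.sub Complex.continuous_ofReal)))
  -- |I| bound
  have hIb : ‖I‖ ≤ Real.exp |w.re| / (a-1) := by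
    have h1 : ‖I‖ ≤ ∫ x in (0:ℝ)..1, ‖((x ^ (a-2) : ℝ) : ℂ) * Complex.exp (w * (1 - x))‖ :=
      intervalIntegral.norm_integral_le_integral_norm (by norm_num)
    have h2 : ∫ x in (0:ℝ)..1, ‖((x ^ (a-2) : ℝ) : ℂ) * Complex.exp (w * (1 - x))‖
        ≤ ∫ x in (0:ℝ)..1, x ^ (a-2) * Real.exp |w.re| := by
      apply intervalIntegral.integral_mono_on (by norm_num)
      · exact (hcont.norm.intervalIntegrable _ _)
      · exact (((Real.continuous_rpow_const (by linarith)).mul continuous_const).intervalIntegrable _ _)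
      · intro x hx
        rw [Set.mem_Icc] at hx
        rw [norm_mul, Complex.norm_real, Real.norm_eq_abs,
          Complex.norm_exp, abs_of_nonneg (Real.rpow_nonneg hx.1 _)]
        apply mul_le_mul_of_nonneg_left _ (Real.rpow_nonneg hx.1 _)
        apply Real.exp_le_exp.mpr
        have hre : (w * (1 - (x:ℂ))).re = w.re * (1-x) := by
          simp [Complex.mul_re]
        rw [hre]
        calc w.re * (1-x) ≤ |w.re| * (1-x) :=
              mul_le_mul_of_nonneg_right (le_abs_self _) (by linarith)
          _ ≤ |w.re| * 1 := mul_le_mul_of_nonneg_left (by linarith) (abs_nonneg _)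
          _ = |w.re| := mul_one _
    have h3 : ∫ x in (0:ℝ)..1, x ^ (a-2) * Real.exp |w.re|
        = Real.exp |w.re| / (a-1) := by
      rw [intervalIntegral.integral_mul_const, integral_rpow (Or.inl (by linarith))]
      rw [Real.one_rpow, Real.zero_rpow (by linarith : a - 2 + 1 ≠ 0)]
      field_simp
      ring
    linarith
  -- tsum value
  have htsum : (Real.Gamma (a-1) : ℂ) * ∑' k : ℕ, w ^ k / (Real.Gamma (a + k) : ℂ) = I := by
    rw [← tsum_mul_left]
    exact hrepr.tsum_eq
  have hts : ∑' k : ℕ, w ^ k / (Real.Gamma (a + k) : ℂ) = (Real.Gamma (a-1) : ℂ)⁻¹ * I := by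
    rw [← htsum, ← mul_assoc, inv_mul_cancel₀ (by exact_mod_cast hΓ1.ne'), one_mul]
  rw [hts, norm_mul, norm_inv, Complex.norm_real, Real.norm_eq_abs, abs_of_pos hΓ1]
  have hΓa : Real.Gamma a = (a-1) * Real.Gamma (a-1) := by
    have h := Real.Gamma_add_one (show a-1 ≠ 0 by intro h; linarith [sub_eq_zero.mp h])
    rwa [sub_add_cancel] at h
  rw [hΓa]
  rw [div_mul_eq_div_div]
  rw [inv_mul_eq_div, div_le_div_iff₀ hΓ1 hΓ1]
  have := mul_le_mul_of_nonneg_right hIb (le_of_lt hΓ1)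
  calc ‖I‖ * Real.Gamma (a-1) ≤ (Real.exp |w.re| / (a-1)) * Real.Gamma (a-1) := this
    _ = Real.exp |w.re| / (a-1) * Real.Gamma (a-1) := rfl

lemma S_bound' (a : ℝ) (ha : 2 ≤ a) (w : ℂ) :
    ‖∑' k : ℕ, w ^ k / (Real.Gamma (a + k) : ℂ)‖
      ≤ Real.exp |w.re| / Real.Gamma a :=
  S_bound a ha w (S_repr a ha w (beta_step a ha))

/-- The Mittag-Leffler function of parameter `1/n` (complex argument). -/
noncomputable def ML (n : ℕ) (z : ℂ) : ℂ :=
  ∑' m : ℕ, z ^ m / (Real.Gamma ((m : ℝ) / n + 1) : ℂ)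

/-- Its truncation at degree `nN`. -/
noncomputable def MLtrunc (n N : ℕ) (z : ℂ) : ℂ :=
  ∑ m ∈ Finset.range (n * N + 1), z ^ m / (Real.Gamma ((m : ℝ) / n + 1) : ℂ)

theorem mittagLeffler_tail_bound (n N : ℕ) (hn : 1 ≤ n) (hN : 1 ≤ N) (z : ℂ) :
    ‖ML n z - MLtrunc n N z‖
      ≤ (∑ l ∈ Finset.Icc 1 n,
            ‖z‖ ^ (n * N + l) / Real.Gamma ((N : ℝ) + 1 + (l : ℝ) / n)) *
          Real.exp |(z ^ n).re| := by
  haveI : NeZero n := ⟨by omega⟩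
  have hn' : (0:ℝ) < n := by exact_mod_cast hn
  set M := n * N + 1 with hM
  set g : ℕ → ℂ := fun m => z ^ m / (Real.Gamma ((m : ℝ) / n + 1) : ℂ) with hg
  set w := z ^ n with hw
  set A : Fin n → ℝ := fun r => (N:ℝ) + 1 + (((r:ℕ):ℝ)+1)/n with hA
  have hA2 : ∀ r : Fin n, 2 ≤ A r := by
    intro r
    have h1 : (0:ℝ) ≤ (((r:ℕ):ℝ)+1)/n := by positivity
    have h2 : (1:ℝ) ≤ (N:ℝ) := by exact_mod_cast hN
    simp only [hA]; linarith
  set G : Fin n × ℕ → ℂ :=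
    fun p => z ^ (M + (p.1:ℕ)) * (w ^ p.2 / (Real.Gamma (A p.1 + p.2) : ℂ)) with hG
  set e : ℕ ≃ Fin n × ℕ := (Nat.divModEquiv n).trans (Equiv.prodComm ℕ (Fin n)) with he
  have hGg : ∀ p : Fin n × ℕ, G p = g (p.2 * n + (p.1:ℕ) + M) := by
    rintro ⟨r, k⟩
    simp only [hG, hg]
    have hexp : k * n + (r:ℕ) + M = (M + (r:ℕ)) + n * k := by ring
    have harg : ((k * n + (r:ℕ) + M : ℕ) : ℝ) / n + 1 = A r + k := by
      simp only [hA]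
      field_simp
      push_cast [hM]
      ring
    have hz : z ^ (k * n + (r:ℕ) + M) = z ^ (M + (r:ℕ)) * w ^ k := by
      rw [hexp, pow_add, pow_mul, hw]
    rw [hz, harg, mul_div_assoc]
  have hej : ∀ j : ℕ, g (j + M) = G (e j) := by
    intro j
    rw [hGg]
    simp only [he, Equiv.trans_apply, Nat.divModEquiv, Equiv.coe_fn_mk, Equiv.prodComm_apply,
      Prod.swap_prod_mk, Fin.val_natCast, Fin.val_ofNat]
    congr 1
    have key : j / n * n + j % n = j := by
      rw [Nat.mul_comm (j / n) n]
      exact Nat.div_add_mod j n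
    omega
  have hfibnorm : ∀ r : Fin n, Summable (fun k => ‖G (r, k)‖) := by
    intro r
    have h1 : (fun k => ‖G (r, k)‖)
        = fun k : ℕ => ‖z ^ (M + (r:ℕ))‖ * ‖w ^ k / (Real.Gamma (A r + k) : ℂ)‖ := by
      funext k
      simp only [hG, norm_mul]
    rw [h1]
    exact (summable_abs_S (A r) (by linarith [hA2 r]) w).mul_left _
  have hGnormsum : Summable (fun p : Fin n × ℕ => ‖G p‖) := by
    apply (summable_prod_of_nonneg (fun p => norm_nonneg _)).mpr
    exact ⟨hfibnorm, Summable.of_finite⟩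
  have hGsum : Summable G := hGnormsum.of_norm
  have htails : Summable (fun j => g (j + M)) := by
    have h1 : Summable (G ∘ e) := e.summable_iff.mpr hGsum
    exact h1.congr fun j => (hej j).symm
  have hgsum : Summable g := (summable_nat_add_iff M).mp htails
  have h1 : ML n z - MLtrunc n N z = ∑' j, g (j + M) := by
    have hML : ML n z = ∑' m, g m := rfl
    have hTr : MLtrunc n N z = ∑ m ∈ Finset.range M, g m := rfl
    rw [hML, hTr, ← Summable.sum_add_tsum_nat_add M hgsum]
    ring
  have hfib : ∀ r : Fin n, Summable fun k => G (r, k) :=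
    fun r => (hfibnorm r).of_norm
  have h2 : ∑' j, g (j + M) = ∑ r : Fin n, ∑' k, G (r, k) := by
    calc ∑' j, g (j + M) = ∑' j, G (e j) := tsum_congr hej
      _ = ∑' p, G p := e.tsum_eq G
      _ = ∑' (r : Fin n), ∑' k, G (r, k) := Summable.tsum_prod' hGsum hfib
      _ = ∑ r : Fin n, ∑' k, G (r, k) := tsum_fintype _
  have h3 : ∀ r : Fin n, ‖∑' k, G (r, k)‖
      ≤ ‖z‖ ^ (M + (r:ℕ)) * (Real.exp |w.re| / Real.Gamma (A r)) := by
    intro r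
    have ht : ∑' k, G (r, k) = z ^ (M + (r:ℕ)) * ∑' k : ℕ, w ^ k / (Real.Gamma (A r + k) : ℂ) := by
      simp only [hG]
      exact tsum_mul_left
    rw [ht, norm_mul, norm_pow]
    exact mul_le_mul_of_nonneg_left (S_bound' (A r) (hA2 r) w) (by positivity)
  calc ‖ML n z - MLtrunc n N z‖
      = ‖∑ r : Fin n, ∑' k, G (r, k)‖ := by rw [h1, h2]
    _ ≤ ∑ r : Fin n, ‖∑' k, G (r, k)‖ := by
        simpa using norm_sum_le Finset.univ (fun r : Fin n => ∑' k, G (r, k))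
    _ ≤ ∑ r : Fin n, ‖z‖ ^ (M + (r:ℕ)) * (Real.exp |w.re| / Real.Gamma (A r)) :=
        Finset.sum_le_sum fun r _ => h3 r
    _ = (∑ l ∈ Finset.Icc 1 n,
            ‖z‖ ^ (n * N + l) / Real.Gamma ((N : ℝ) + 1 + (l : ℝ) / n)) *
          Real.exp |(z ^ n).re| := by
        rw [Finset.sum_mul]
        have hIcc : Finset.Icc 1 n = Finset.Ico 1 (n+1) := by
          rw [Finset.Ico_add_one_right_eq_Icc]
        rw [hIcc, Finset.sum_Ico_eq_sum_range]
        simp only [hA, hM, hw]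
        rw [Fin.sum_univ_eq_sum_range
          (fun i => ‖z‖ ^ (n*N+1 + i) * (Real.exp |(z^n).re| / Real.Gamma ((N:ℝ) + 1 + ((i:ℝ)+1)/n)))]
        have hrange : n + 1 - 1 = n := by omega
        rw [hrange]
        apply Finset.sum_congr rfl
        intro i _
        have he1 : n*N+1 + i = n * N + (1 + i) := by omega
        have he2 : ((N:ℝ) + 1 + ((i:ℝ)+1)/n) = ((N:ℝ) + 1 + ((1+i:ℕ):ℝ)/n) := by
          push_cast; ring_nf
        rw [he1, he2]
        ring
end

section
/- For n ≥ 1, N ≥ 2 and z ∈ ℂ: |d/dz (E_{1/n}(z) − E_{1/n}^{nN}(z))| ≤ n|z|^{n−1} ∑_{l=1}^n |z|^{n(N−1)+l}/Γ(N+l/n) · e^{|Re(z^n)|}. -/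
set_option maxHeartbeats 1000000

open Real Finset
open MeasureTheory Set intervalIntegral Metric

lemma gamma_mul_factorial_le {a : ℝ} (ha : 1 ≤ a) (j : ℕ) :
    Real.Gamma a * j.factorial ≤ Real.Gamma (a + j) := by
  induction j with
  | zero => simp
  | succ j ih =>
    have h0 : (0:ℝ) < a + j := by
      have : (0:ℝ) ≤ j := Nat.cast_nonneg j
      linarith
    have hG : Real.Gamma (a + (j+1 : ℕ)) = (a + j) * Real.Gamma (a + j) := by
      have h : (a + ((j+1 : ℕ) : ℝ)) = (a + j) + 1 := by push_cast; ring
      rw [h, Real.Gamma_add_one (ne_of_gt h0)]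
    have hGpos : 0 < Real.Gamma (a + j) := Real.Gamma_pos_of_pos h0
    have hj1 : ((j:ℝ) + 1) ≤ a + j := by linarith
    calc Real.Gamma a * ((j+1).factorial : ℝ)
        = (Real.Gamma a * j.factorial) * ((j:ℝ)+1) := by
          push_cast [Nat.factorial_succ]; ring
      _ ≤ Real.Gamma (a+j) * ((j:ℝ)+1) := by
          apply mul_le_mul_of_nonneg_right ih; positivity
      _ ≤ Real.Gamma (a+j) * (a+j) := by
          apply mul_le_mul_of_nonneg_left hj1 hGpos.le
      _ = Real.Gamma (a + ((j+1:ℕ):ℝ)) := by rw [hG]; ring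

lemma cont_rpow (p : ℝ) (hp : 0 ≤ p) : Continuous fun t : ℝ => ((1 - t) ^ p : ℝ) :=
  (continuous_const.sub continuous_id).rpow_const fun _ => Or.inr hp

lemma norm_div_gamma (w : ℂ) (m : ℕ) {x : ℝ} (hx : 0 < x) :
    ‖w ^ m / (x : ℂ)‖ = ‖w‖ ^ m / x := by
  rw [norm_div, norm_pow, Complex.norm_real, Real.norm_of_nonneg hx.le]

lemma div_gamma_le (r : ℝ) (hr : 0 ≤ r) {b : ℝ} (hb : 1 ≤ b) (j : ℕ) :
    r ^ j / Real.Gamma (b + j) ≤ (Real.Gamma b)⁻¹ * (r ^ j / j.factorial) := by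
  have h0 : (0:ℝ) < b := lt_of_lt_of_le one_pos hb
  have hGb : 0 < Real.Gamma b := Real.Gamma_pos_of_pos h0
  have hfac : (0:ℝ) < j.factorial := by positivity
  have h2 := gamma_mul_factorial_le hb j
  have h3 : r ^ j / Real.Gamma (b + j) ≤ r ^ j / (Real.Gamma b * j.factorial) := by
    gcongr
  calc r ^ j / Real.Gamma (b + j) ≤ r ^ j / (Real.Gamma b * j.factorial) := h3
    _ = (Real.Gamma b)⁻¹ * (r ^ j / j.factorial) := by field_simp

lemma summable_inner (r : ℝ) (hr : 0 ≤ r) {b : ℝ} (hb : 1 ≤ b) :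
    Summable (fun j : ℕ => r ^ j / Real.Gamma (b + j)) :=
  Summable.of_nonneg_of_le
    (fun j => by
      have : 0 < Real.Gamma (b + j) :=
        Real.Gamma_pos_of_pos (by have : (0:ℝ) ≤ j := Nat.cast_nonneg j; linarith)
      positivity)
    (fun j => div_gamma_le r hr hb j)
    ((Real.summable_pow_div_factorial r).mul_left _)

lemma summable_inner_c (u : ℂ) {b : ℝ} (hb : 1 ≤ b) :
    Summable (fun j : ℕ => u ^ j / (Real.Gamma (b + 1 + j) : ℂ)) := by
  apply Summable.of_norm
  have hb' : 1 ≤ b + 1 := by linarith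
  apply Summable.of_nonneg_of_le (fun j => norm_nonneg _)
    (fun j => ?_) (summable_inner ‖u‖ (norm_nonneg u) hb')
  have hbj : (0:ℝ) < b + 1 + j := by
    have : (0:ℝ) ≤ j := Nat.cast_nonneg j; linarith
  rw [norm_div_gamma u j (Real.Gamma_pos_of_pos hbj)]

lemma beta_eval {b : ℝ} (hb : 1 < b) (j : ℕ) :
    (∫ t in (0:ℝ)..1, (((1 - t) ^ (b - 1) : ℝ) : ℂ) * (t : ℂ) ^ j)
      = (j.factorial : ℂ) * (Real.Gamma b : ℂ) / (Real.Gamma (b + 1 + j) : ℂ) := by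
  have hb0 : (0:ℝ) < b := by linarith
  have h1 : (∫ t in (0:ℝ)..1, (((1 - t) ^ (b - 1) : ℝ) : ℂ) * (t:ℂ) ^ j)
      = Complex.betaIntegral ((j:ℂ) + 1) (b:ℂ) := by
    rw [Complex.betaIntegral]
    apply intervalIntegral.integral_congr
    intro t ht
    rw [Set.uIcc_of_le zero_le_one] at ht
    have h1t : (0:ℝ) ≤ 1 - t := by linarith [ht.2]
    have e1 : (t:ℂ) ^ ((j:ℂ) + 1 - 1) = (t:ℂ) ^ (j:ℕ) := by
      rw [add_sub_cancel_right, Complex.cpow_natCast]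
    have e3 : ((1:ℂ) - (t:ℂ)) ^ ((b:ℂ) - 1) = (((1 - t) ^ (b - 1) : ℝ) : ℂ) := by
      rw [show ((1:ℂ) - (t:ℂ)) = ((1 - t : ℝ) : ℂ) by push_cast; ring,
        show ((b:ℂ) - 1) = ((b - 1 : ℝ) : ℂ) by push_cast; ring,
        ← Complex.ofReal_cpow h1t]
    show (((1 - t) ^ (b - 1) : ℝ) : ℂ) * (t:ℂ) ^ j
        = (t:ℂ) ^ ((j:ℂ) + 1 - 1) * ((1:ℂ) - (t:ℂ)) ^ ((b:ℂ) - 1)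
    rw [e1, e3]; ring
  rw [h1]
  have hs : 0 < Complex.re ((j:ℂ) + 1) := by
    simp only [Complex.add_re, Complex.natCast_re, Complex.one_re]; positivity
  have ht : 0 < Complex.re (b:ℂ) := by simpa using hb0
  have h2 := Complex.Gamma_mul_Gamma_eq_betaIntegral hs ht
  have hΓ1 : Complex.Gamma ((j:ℂ) + 1) = (j.factorial : ℂ) := Complex.Gamma_nat_eq_factorial j
  have hΓ2 : Complex.Gamma ((j:ℂ) + 1 + (b:ℂ)) = ((Real.Gamma (b + 1 + j) : ℝ) : ℂ) := by
    rw [show ((j:ℂ) + 1 + (b:ℂ)) = (((b + 1 + j : ℝ)) : ℂ) by push_cast; ring,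
      Complex.Gamma_ofReal]
  have hΓb : Complex.Gamma (b:ℂ) = ((Real.Gamma b : ℝ) : ℂ) := Complex.Gamma_ofReal b
  have hne : ((Real.Gamma (b + 1 + j) : ℝ) : ℂ) ≠ 0 :=
    Complex.ofReal_ne_zero.mpr (ne_of_gt (Real.Gamma_pos_of_pos (by positivity)))
  rw [hΓ1, hΓb, hΓ2] at h2
  field_simp
  linear_combination -h2

lemma tsum_eq_integral {b : ℝ} (hb : 1 < b) (u : ℂ) :
    (Real.Gamma b : ℂ) * ∑' j : ℕ, u ^ j / (Real.Gamma (b + 1 + j) : ℂ)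
      = ∫ t in (0:ℝ)..1, (((1 - t) ^ (b - 1) : ℝ) : ℂ) * Complex.exp (u * t) := by
  have hb0 : (0:ℝ) < b := by linarith
  set f : ℕ → ℝ → ℂ := fun j t => (((1 - t) ^ (b - 1) : ℝ) : ℂ) * ((u * t) ^ j / j.factorial)
    with hf
  have hcont : ∀ j, Continuous (f j) := by
    intro j
    exact (Complex.continuous_ofReal.comp (cont_rpow (b-1) (by linarith))).mul
      (((continuous_const.mul Complex.continuous_ofReal).pow j).div_const _)
  have hInt : ∀ j, Integrable (f j) (volume.restrict (Ioc (0:ℝ) 1)) := fun j =>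
    (hcont j).integrableOn_Ioc
  have hnorm : ∀ j, ∀ t ∈ Ioc (0:ℝ) 1, ‖f j t‖ ≤ ‖u‖ ^ j / j.factorial := by
    intro j t ht
    have h1t : (0:ℝ) ≤ 1 - t := by linarith [ht.2]
    have h2 : ((1 - t) ^ (b-1) : ℝ) ≤ 1 :=
      Real.rpow_le_one h1t (by linarith [ht.1]) (by linarith)
    have h3 : ‖u * (t:ℂ)‖ ≤ ‖u‖ := by
      rw [norm_mul, Complex.norm_real, Real.norm_of_nonneg ht.1.le]
      calc ‖u‖ * t ≤ ‖u‖ * 1 := by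
            apply mul_le_mul_of_nonneg_left ht.2 (norm_nonneg u)
        _ = ‖u‖ := mul_one _
    rw [norm_mul, norm_div, Complex.norm_real, norm_pow]
    rw [Real.norm_of_nonneg (Real.rpow_nonneg h1t _)]
    calc ((1-t) ^ (b-1) : ℝ) * (‖u * t‖ ^ j / ‖(j.factorial : ℂ)‖)
        ≤ 1 * (‖u‖ ^ j / j.factorial) := by
          apply mul_le_mul h2 ?_ (by positivity) zero_le_one
          rw [show ‖(j.factorial : ℂ)‖ = (j.factorial : ℝ) by
            rw [Complex.norm_natCast]]
          gcongr
      _ = ‖u‖ ^ j / j.factorial := one_mul _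
  have hintnorm : ∀ j, (∫ t in Ioc (0:ℝ) 1, ‖f j t‖) ≤ ‖u‖ ^ j / j.factorial := by
    intro j
    have h0 := MeasureTheory.setIntegral_mono_on (hInt j).norm
      (integrableOn_const measure_Ioc_lt_top.ne) measurableSet_Ioc (hnorm j)
    simpa [Real.volume_Ioc] using h0
  have hsum : Summable fun j => ∫ t in Ioc (0:ℝ) 1, ‖f j t‖ :=
    Summable.of_nonneg_of_le (fun j => integral_nonneg fun t => norm_nonneg _)
      hintnorm (Real.summable_pow_div_factorial ‖u‖)
  have swap := MeasureTheory.integral_tsum_of_summable_integral_norm hInt hsum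
  have hpt : ∀ t : ℝ, (∑' j, f j t) = (((1 - t) ^ (b - 1) : ℝ) : ℂ) * Complex.exp (u * t) := by
    intro t
    have he : Complex.exp (u * t) = ∑' (n : ℕ), (u * (t:ℂ)) ^ n / n.factorial := by
      rw [Complex.exp_eq_exp_ℂ, NormedSpace.exp_eq_tsum_div]
    rw [he]
    exact tsum_mul_left
  have hterm : ∀ j, (∫ t in Ioc (0:ℝ) 1, f j t)
      = (Real.Gamma b : ℂ) * (u ^ j / (Real.Gamma (b + 1 + j) : ℂ)) := by
    intro j
    have e1 : (∫ t in Ioc (0:ℝ) 1, f j t) = ∫ t in (0:ℝ)..1, f j t :=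
      (intervalIntegral.integral_of_le zero_le_one).symm
    have e2 : (∫ t in (0:ℝ)..1, f j t)
        = (u ^ j / j.factorial) * ∫ t in (0:ℝ)..1, (((1 - t) ^ (b - 1) : ℝ) : ℂ) * (t:ℂ) ^ j := by
      rw [← intervalIntegral.integral_const_mul]
      apply intervalIntegral.integral_congr
      intro t _
      simp only [hf]
      rw [mul_pow]
      ring
    have hjne : (j.factorial : ℂ) ≠ 0 := by exact_mod_cast j.factorial_ne_zero
    have hΓne : ((Real.Gamma (b + 1 + j)) : ℂ) ≠ 0 :=
      Complex.ofReal_ne_zero.mpr (ne_of_gt (Real.Gamma_pos_of_pos (by positivity)))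
    rw [e1, e2, beta_eval hb j]
    field_simp
  calc (Real.Gamma b : ℂ) * ∑' j : ℕ, u ^ j / (Real.Gamma (b + 1 + j) : ℂ)
      = ∑' j, (∫ t in Ioc (0:ℝ) 1, f j t) := by
        rw [← tsum_mul_left]
        exact tsum_congr fun j => (hterm j).symm
    _ = ∫ t in Ioc (0:ℝ) 1, (∑' j, f j t) := swap
    _ = ∫ t in Ioc (0:ℝ) 1, (((1 - t) ^ (b - 1) : ℝ) : ℂ) * Complex.exp (u * t) := by
        exact integral_congr_ae (Filter.Eventually.of_forall fun t => hpt t)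
    _ = ∫ t in (0:ℝ)..1, (((1 - t) ^ (b - 1) : ℝ) : ℂ) * Complex.exp (u * t) :=
        (intervalIntegral.integral_of_le zero_le_one).symm

lemma cont_integrand (p : ℝ) (hp : 0 ≤ p) (u : ℂ) :
    Continuous fun t : ℝ => (((1 - t) ^ p : ℝ) : ℂ) * Complex.exp (u * t) :=
  (Complex.continuous_ofReal.comp (cont_rpow p hp)).mul
    ((continuous_const.mul Complex.continuous_ofReal).cexp)

lemma ftc_aux {p : ℝ} (hp : 1 < p) (u : ℂ) :
    (p : ℂ) * (∫ t in (0:ℝ)..1, (((1 - t) ^ (p - 1) : ℝ) : ℂ) * Complex.exp (u * t))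
      - u * (∫ t in (0:ℝ)..1, (((1 - t) ^ p : ℝ) : ℂ) * Complex.exp (u * t)) = 1 := by
  set F : ℝ → ℂ := fun t => -((((1 - t) ^ p : ℝ) : ℂ) * Complex.exp (u * t)) with hF
  set g : ℝ → ℂ := fun t =>
    (p : ℂ) * ((((1 - t) ^ (p - 1) : ℝ) : ℂ) * Complex.exp (u * t))
      - u * ((((1 - t) ^ p : ℝ) : ℂ) * Complex.exp (u * t)) with hg
  have key : ∀ t ∈ Set.uIcc (0:ℝ) 1, HasDerivAt F (g t) t := by
    intro t _
    have hr : HasDerivAt (fun s : ℝ => ((1 - s) ^ p : ℝ)) (-(p * (1 - t) ^ (p - 1))) t := by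
      have h1 : HasDerivAt (fun s : ℝ => 1 - s) (-1) t := (hasDerivAt_id t).const_sub 1
      have h2 : HasDerivAt (fun x : ℝ => x ^ p) (p * (1 - t) ^ (p - 1)) (1 - t) :=
        Real.hasDerivAt_rpow_const (Or.inr hp.le)
      have := h2.comp t h1
      simpa [Function.comp_def] using this
    have hrc : HasDerivAt (fun s : ℝ => (((1 - s) ^ p : ℝ) : ℂ))
        ((-(p * (1 - t) ^ (p - 1)) : ℝ) : ℂ) t := hr.ofReal_comp
    have hec : HasDerivAt (fun s : ℝ => Complex.exp (u * s)) (u * Complex.exp (u * t)) t := by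
      have h3 : HasDerivAt (fun s : ℝ => ((s : ℂ))) 1 t := Complex.ofRealCLM.hasDerivAt
      have h4 : HasDerivAt (fun s : ℝ => u * (s : ℂ)) u t := by simpa using h3.const_mul u
      have := h4.cexp
      simpa [mul_comm] using this
    have := (hrc.fun_mul hec).fun_neg
    refine this.congr_deriv ?_
    simp only [hg]
    push_cast
    ring
  have hint : IntervalIntegrable g MeasureTheory.volume 0 1 := by
    apply Continuous.intervalIntegrable
    exact (continuous_const.mul (cont_integrand (p-1) (by linarith) u)).sub
      (continuous_const.mul (cont_integrand p (by linarith) u))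
  have h5 := intervalIntegral.integral_eq_sub_of_hasDerivAt key hint
  have hF1 : F 1 = 0 := by
    simp only [hF]
    rw [show (1:ℝ) - 1 = 0 by ring, Real.zero_rpow (by linarith : p ≠ 0)]
    simp
  have hF0 : F 0 = -1 := by
    simp only [hF]
    norm_num
  have h6 : (∫ t in (0:ℝ)..1, g t) = 1 := by rw [h5, hF1, hF0]; ring
  rw [← h6, hg]
  rw [intervalIntegral.integral_sub ((continuous_const.fun_mul (cont_integrand (p-1) (by linarith) u)).intervalIntegrable 0 1)
    ((continuous_const.fun_mul (cont_integrand p (by linarith) u)).intervalIntegrable 0 1),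
    intervalIntegral.integral_const_mul, intervalIntegral.integral_const_mul]

lemma hasDerivAt_IB {p : ℝ} (hp : 0 < p) (u : ℂ) :
    HasDerivAt (fun v : ℂ => ∫ t in (0:ℝ)..1, (((1 - t) ^ p : ℝ) : ℂ) * Complex.exp (v * t))
      (∫ t in (0:ℝ)..1, (((1 - t) ^ p : ℝ) : ℂ) * ((t : ℂ) * Complex.exp (u * t))) u := by
  have main := (intervalIntegral.hasDerivAt_integral_of_dominated_loc_of_deriv_le
    (F := fun v (t : ℝ) => (((1 - t) ^ p : ℝ) : ℂ) * Complex.exp (v * t))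
    (F' := fun v (t : ℝ) => (((1 - t) ^ p : ℝ) : ℂ) * ((t : ℂ) * Complex.exp (v * t)))
    (x₀ := u) (a := 0) (b := 1) (μ := MeasureTheory.volume)
    (bound := fun _ => Real.exp (‖u‖ + 1)) (s := ball u 1) (ball_mem_nhds u one_pos)
    ?_ ?_ ?_ ?_ ?_ ?_).2
  · exact main
  · filter_upwards with v
    exact (cont_integrand p hp.le v).aestronglyMeasurable
  · exact (cont_integrand p hp.le u).intervalIntegrable 0 1
  · apply Continuous.aestronglyMeasurable
    exact (Complex.continuous_ofReal.comp (cont_rpow p hp.le)).mul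
      (Complex.continuous_ofReal.mul ((continuous_const.mul Complex.continuous_ofReal).cexp))
  · filter_upwards with t ht v hv
    rw [Set.uIoc_of_le zero_le_one] at ht
    have h1t : (0:ℝ) ≤ 1 - t := by linarith [ht.2]
    have h2 : ((1 - t) ^ p : ℝ) ≤ 1 := Real.rpow_le_one h1t (by linarith [ht.1]) hp.le
    have hvn : ‖v‖ ≤ ‖u‖ + 1 := by
      have := mem_ball_iff_norm.mp hv
      calc ‖v‖ ≤ ‖v - u‖ + ‖u‖ := by simpa using norm_add_le (v - u) u
        _ ≤ ‖u‖ + 1 := by linarith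
    have h3 : ‖Complex.exp (v * t)‖ ≤ Real.exp (‖u‖ + 1) := by
      rw [Complex.norm_exp]
      apply Real.exp_le_exp.mpr
      have : (v * (t:ℂ)).re = v.re * t := by simp [Complex.mul_re]
      rw [this]
      calc v.re * t ≤ |v.re| * t := by
            apply mul_le_mul_of_nonneg_right (le_abs_self _) ht.1.le
        _ ≤ ‖v‖ * 1 := by
            apply mul_le_mul (Complex.abs_re_le_norm v) ht.2 ht.1.le (norm_nonneg v)
        _ ≤ ‖u‖ + 1 := by simpa using hvn
    calc ‖(((1 - t) ^ p : ℝ) : ℂ) * ((t : ℂ) * Complex.exp (v * t))‖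
        = ((1 - t) ^ p : ℝ) * (t * ‖Complex.exp (v * t)‖) := by
          rw [norm_mul, norm_mul, Complex.norm_real, Complex.norm_real,
            Real.norm_of_nonneg (Real.rpow_nonneg h1t _), Real.norm_of_nonneg ht.1.le]
      _ ≤ 1 * (1 * Real.exp (‖u‖ + 1)) := by
          apply mul_le_mul h2 ?_ (mul_nonneg ht.1.le (norm_nonneg _)) zero_le_one
          apply mul_le_mul ht.2 h3 (norm_nonneg _) zero_le_one
      _ = Real.exp (‖u‖ + 1) := by ring
  · exact intervalIntegrable_const
  · filter_upwards with t ht v hv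
    have hd : HasDerivAt (fun w : ℂ => Complex.exp (w * t)) ((t:ℂ) * Complex.exp (v * t)) v := by
      have h1 : HasDerivAt (fun w : ℂ => w * (t:ℂ)) (t:ℂ) v := by
        simpa using (hasDerivAt_id v).mul_const (t:ℂ)
      have := h1.cexp
      simpa [mul_comm] using this
    exact hd.const_mul _

lemma split_integral {b : ℝ} (hb : 2 < b) (u : ℂ) :
    (∫ t in (0:ℝ)..1, (((1 - t) ^ (b - 1) : ℝ) : ℂ) * ((t:ℂ) * Complex.exp (u * t)))
      = (∫ t in (0:ℝ)..1, (((1 - t) ^ (b - 1) : ℝ) : ℂ) * Complex.exp (u * t))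
        - ∫ t in (0:ℝ)..1, (((1 - t) ^ b : ℝ) : ℂ) * Complex.exp (u * t) := by
  rw [← intervalIntegral.integral_sub ((cont_integrand (b-1) (by linarith) u).intervalIntegrable 0 1)
    ((cont_integrand b (by linarith) u).intervalIntegrable 0 1)]
  apply intervalIntegral.integral_congr
  intro t ht
  rw [Set.uIcc_of_le zero_le_one] at ht
  have hkey : ((1 - t) ^ (b - 1) : ℝ) * t = ((1 - t) ^ (b - 1) : ℝ) - ((1 - t) ^ b : ℝ) := by
    rcases eq_or_lt_of_le ht.2 with h | h
    · rw [h, sub_self, Real.zero_rpow (by linarith : b - 1 ≠ 0),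
        Real.zero_rpow (by linarith : b ≠ 0)]
      ring
    · have h1t : (0:ℝ) < 1 - t := by linarith
      have he : ((1 - t) ^ b : ℝ) = ((1 - t) ^ (b - 1) : ℝ) * (1 - t) := by
        have h2 := Real.rpow_add_one (ne_of_gt h1t) (b - 1)
        rw [show b - 1 + 1 = b by ring] at h2
        exact h2
      rw [he]; ring
  show (((1 - t) ^ (b - 1) : ℝ) : ℂ) * ((t:ℂ) * Complex.exp (u * t))
      = (((1 - t) ^ (b - 1) : ℝ) : ℂ) * Complex.exp (u * t)
        - (((1 - t) ^ b : ℝ) : ℂ) * Complex.exp (u * t)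
  have : ((((1 - t) ^ (b - 1) : ℝ) * t : ℝ) : ℂ)
      = ((((1 - t) ^ (b - 1) : ℝ) - ((1 - t) ^ b : ℝ) : ℝ) : ℂ) :=
    congrArg (fun r : ℝ => (r : ℂ)) hkey
  push_cast at this
  linear_combination Complex.exp (u * t) * this

lemma scalar_identity {b : ℝ} (hb : 2 < b) (u : ℂ) :
    (b:ℂ) * (∫ t in (0:ℝ)..1, (((1 - t) ^ (b - 1) : ℝ) : ℂ) * Complex.exp (u * t))
      + u * (∫ t in (0:ℝ)..1, (((1 - t) ^ (b - 1) : ℝ) : ℂ) * ((t:ℂ) * Complex.exp (u * t)))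
    = ((b:ℂ) - 1) * ∫ t in (0:ℝ)..1, (((1 - t) ^ (b - 2) : ℝ) : ℂ) * Complex.exp (u * t) := by
  have h1 := ftc_aux (p := b - 1) (by linarith) u
  have h2 := ftc_aux (p := b) (by linarith) u
  rw [show b - 1 - 1 = b - 2 by ring] at h1
  rw [split_integral hb u]
  push_cast at h1 h2 ⊢
  linear_combination h2 - h1

lemma deriv_piece (n M : ℕ) (hn : 1 ≤ n) {b : ℝ} (hb : 2 < b)
    (hnb : ((n + M : ℕ) : ℝ) = n * b) (z : ℂ) :
    HasDerivAt (fun w : ℂ => w ^ (n + M) * ((Real.Gamma b : ℂ)⁻¹ *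
        ∫ t in (0:ℝ)..1, (((1 - t) ^ (b - 1) : ℝ) : ℂ) * Complex.exp (w ^ n * t)))
      ((n : ℂ) * z ^ (n - 1) * (z ^ M * ((Real.Gamma (b - 1) : ℂ)⁻¹ *
        ∫ t in (0:ℝ)..1, (((1 - t) ^ (b - 2) : ℝ) : ℂ) * Complex.exp (z ^ n * t)))) z := by
  obtain ⟨n', rfl⟩ : ∃ n', n = n' + 1 := ⟨n - 1, by omega⟩
  have h1 : HasDerivAt (fun w : ℂ => w ^ (n' + 1 + M))
      ((n' + 1 + M : ℕ) * z ^ (n' + M)) z := by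
    simpa using hasDerivAt_pow (n' + 1 + M) z
  have h2 : HasDerivAt (fun w : ℂ => w ^ (n' + 1)) ((n' + 1 : ℕ) * z ^ n') z := by
    simpa using hasDerivAt_pow (n' + 1) z
  have h3 : HasDerivAt (fun w : ℂ =>
      ∫ t in (0:ℝ)..1, (((1 - t) ^ (b - 1) : ℝ) : ℂ) * Complex.exp (w ^ (n' + 1) * t))
      ((∫ t in (0:ℝ)..1, (((1 - t) ^ (b - 1) : ℝ) : ℂ) * ((t:ℂ) * Complex.exp (z ^ (n' + 1) * t)))
        * ((n' + 1 : ℕ) * z ^ n')) z :=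
    by have := (hasDerivAt_IB (p := b - 1) (by linarith) (z ^ (n' + 1))).comp z h2; exact this
  have h4 := h1.fun_mul (h3.const_mul ((Real.Gamma b : ℂ)⁻¹))
  refine h4.congr_deriv ?_
  symm
  have hΓ : Real.Gamma b = (b - 1) * Real.Gamma (b - 1) := by
    have h5 := Real.Gamma_add_one (by linarith : b - 1 ≠ 0)
    rw [show b - 1 + 1 = b by ring] at h5
    exact h5
  have hΓpos : 0 < Real.Gamma (b - 1) := Real.Gamma_pos_of_pos (by linarith)
  have hΓc : (Real.Gamma b : ℂ) = ((b:ℂ) - 1) * (Real.Gamma (b - 1) : ℂ) := by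
    rw [hΓ]; push_cast; ring
  have hΓ1ne : (Real.Gamma (b - 1) : ℂ) ≠ 0 := Complex.ofReal_ne_zero.mpr (ne_of_gt hΓpos)
  have hb1ne : ((b:ℂ) - 1) ≠ 0 := by
    intro h
    have h6 : (b:ℂ) = 1 := by linear_combination h
    have h7 : b = 1 := by exact_mod_cast h6
    linarith
  have hsc := scalar_identity hb (z ^ (n' + 1))
  have hnb' : ((n' + 1 + M : ℕ) : ℂ) = ((n' + 1 : ℕ) : ℂ) * (b : ℂ) := by
    have h8 : ((n' + 1 + M : ℕ) : ℝ) = ((n' + 1 : ℕ) : ℝ) * b := hnb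
    exact_mod_cast congrArg (fun r : ℝ => (r : ℂ)) h8
  have hp1 : z ^ (n' + 1 + M) * z ^ n' = z ^ n' * z ^ M * z ^ (n' + 1) := by
    rw [← pow_add, ← pow_add, ← pow_add]; congr 1; omega
  have hp2 : z ^ (n' + M) = z ^ n' * z ^ M := by rw [← pow_add]
  simp only [Nat.add_sub_cancel]
  rw [hnb', hΓc, hp2, mul_inv]
  have hinv : ((b:ℂ) - 1) * ((b:ℂ) - 1)⁻¹ = 1 := mul_inv_cancel₀ hb1ne
  linear_combination
    -(((n' + 1 : ℕ) : ℂ) * (z ^ n' * z ^ M) * ((b:ℂ) - 1)⁻¹ * (Real.Gamma (b-1) : ℂ)⁻¹) * hsc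
    - (((n' + 1 : ℕ) : ℂ) * ((b:ℂ) - 1)⁻¹ * (Real.Gamma (b-1) : ℂ)⁻¹ *
      (∫ t in (0:ℝ)..1, (((1 - t) ^ (b - 1) : ℝ) : ℂ) * ((t:ℂ) * Complex.exp (z ^ (n' + 1) * t)))) * hp1
    - (((n' + 1 : ℕ) : ℂ) * (z ^ n' * z ^ M) * (Real.Gamma (b-1) : ℂ)⁻¹ *
      (∫ t in (0:ℝ)..1, (((1 - t) ^ (b - 2) : ℝ) : ℂ) * Complex.exp (z ^ (n' + 1) * t))) * hinv

lemma cast_arg {n : ℕ} (hn : 1 ≤ n) (q r : ℕ) :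
    (((q * n + r : ℕ)):ℝ) / n + 1 = ((r:ℝ) / n + 1) + q := by
  have hn0 : (n:ℝ) ≠ 0 := Nat.cast_ne_zero.mpr (by omega)
  push_cast
  field_simp
  ring

lemma summable_ml_norm {n : ℕ} (hn : 1 ≤ n) (w : ℂ) :
    Summable (fun m : ℕ => ‖w‖ ^ m / Real.Gamma ((m:ℝ) / n + 1)) := by
  haveI : NeZero n := ⟨by omega⟩
  set g : ℕ → ℝ := fun m => ‖w‖ ^ m / Real.Gamma ((m:ℝ)/n + 1) with hg
  rw [← Equiv.summable_iff (Nat.divModEquiv n).symm]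
  have hfib0 : ∀ r : Fin n, Summable fun q : ℕ => g (q * n + ↑r) := by
    intro r
    have hb : (1:ℝ) ≤ (↑(r:ℕ):ℝ)/n + 1 := by
      have : (0:ℝ) ≤ (↑(r:ℕ):ℝ)/n := by positivity
      linarith
    have heq : ∀ q : ℕ, g (q * n + ↑r)
        = ‖w‖ ^ (r:ℕ) * ((‖w‖ ^ n) ^ q / Real.Gamma (((↑(r:ℕ):ℝ)/n + 1) + q)) := by
      intro q
      simp only [hg]
      rw [cast_arg hn q r, pow_add, mul_comm q n, pow_mul]
      ring
    exact Summable.congr ((summable_inner (‖w‖^n) (by positivity) hb).mul_left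
      (‖w‖ ^ (r:ℕ))) fun q => (heq q).symm
  apply (summable_prod_of_nonneg ?_).mpr
  constructor
  · intro q
    exact Summable.of_finite
  · apply Summable.congr (f := fun q : ℕ => ∑ r : Fin n, g (q * n + ↑r))
    · exact summable_sum fun r _ => hfib0 r
    · intro q
      rw [← tsum_fintype (L := .unconditional _)]
      rfl
  · intro p
    have : (0:ℝ) < ((↑(p.1 * n + ↑p.2):ℝ)/n + 1) := by positivity
    exact div_nonneg (by positivity) (Real.Gamma_pos_of_pos this).le

lemma summable_ml {n : ℕ} (hn : 1 ≤ n) (w : ℂ) :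
    Summable (fun m : ℕ => w ^ m / (Real.Gamma ((m:ℝ) / n + 1) : ℂ)) := by
  apply Summable.of_norm
  apply Summable.congr (summable_ml_norm hn w)
  intro m
  exact (norm_div_gamma w m (Real.Gamma_pos_of_pos (by positivity))).symm

lemma fiber_eq {n N : ℕ} (hn : 1 ≤ n) (hN : 2 ≤ N) (w : ℂ) (r : ℕ) :
    (∑' q : ℕ, w ^ (q * n + r + (n*N+1)) /
        (Real.Gamma (((q * n + r + (n*N+1) : ℕ) : ℝ) / n + 1) : ℂ))
      = w ^ (n*N + (r+1)) * ((Real.Gamma ((N:ℝ) + ((r+1:ℕ):ℝ)/n) : ℂ)⁻¹ *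
          ∫ t in (0:ℝ)..1,
            (((1 - t) ^ ((N:ℝ) + ((r+1:ℕ):ℝ)/n - 1) : ℝ) : ℂ) * Complex.exp (w^n * t)) := by
  have hn0 : (n:ℝ) ≠ 0 := Nat.cast_ne_zero.mpr (by omega)
  set b : ℝ := (N:ℝ) + ((r+1:ℕ):ℝ)/n with hb
  have hb1 : 1 < b := by
    have h1 : (0:ℝ) ≤ ((r+1:ℕ):ℝ)/n := by positivity
    have h2 : (2:ℝ) ≤ (N:ℝ) := by exact_mod_cast hN
    simp only [hb]; linarith
  have hΓpos : 0 < Real.Gamma b := Real.Gamma_pos_of_pos (by linarith)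
  have hΓne : (Real.Gamma b : ℂ) ≠ 0 := Complex.ofReal_ne_zero.mpr (ne_of_gt hΓpos)
  have harg : ∀ q : ℕ, ((q * n + r + (n*N+1) : ℕ) : ℝ) / n + 1 = b + 1 + q := by
    intro q
    simp only [hb]
    push_cast
    field_simp
    ring
  have hexp : ∀ q : ℕ, q * n + r + (n*N+1) = (n*N + (r+1)) + n * q := fun q => by ring
  have hterm : ∀ q : ℕ, w ^ (q * n + r + (n*N+1)) /
        (Real.Gamma (((q * n + r + (n*N+1) : ℕ) : ℝ) / n + 1) : ℂ)
      = w ^ (n*N + (r+1)) * ((w^n) ^ q / (Real.Gamma (b + 1 + q) : ℂ)) := by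
    intro q
    rw [harg q, hexp q, pow_add, pow_mul]
    ring
  calc (∑' q : ℕ, w ^ (q * n + r + (n*N+1)) /
        (Real.Gamma (((q * n + r + (n*N+1) : ℕ) : ℝ) / n + 1) : ℂ))
      = ∑' q : ℕ, w ^ (n*N + (r+1)) * ((w^n) ^ q / (Real.Gamma (b + 1 + q) : ℂ)) :=
        tsum_congr hterm
    _ = w ^ (n*N + (r+1)) * ∑' q : ℕ, ((w^n) ^ q / (Real.Gamma (b + 1 + q) : ℂ)) :=
        tsum_mul_left
    _ = w ^ (n*N + (r+1)) * ((Real.Gamma b : ℂ)⁻¹ *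
          ∫ t in (0:ℝ)..1, (((1 - t) ^ (b - 1) : ℝ) : ℂ) * Complex.exp (w^n * t)) := by
        rw [← tsum_eq_integral hb1 (w^n)]
        field_simp

lemma fiber_summable {n N : ℕ} (hn : 1 ≤ n) (hN : 2 ≤ N) (w : ℂ) (r : ℕ) :
    Summable fun q : ℕ => w ^ (q * n + r + (n*N+1)) /
      (Real.Gamma (((q * n + r + (n*N+1) : ℕ) : ℝ) / n + 1) : ℂ) := by
  have hn0 : (n:ℝ) ≠ 0 := Nat.cast_ne_zero.mpr (by omega)
  set b : ℝ := (N:ℝ) + ((r+1:ℕ):ℝ)/n with hb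
  have hb1 : (1:ℝ) ≤ b := by
    have h1 : (0:ℝ) ≤ ((r+1:ℕ):ℝ)/n := by positivity
    have h2 : (2:ℝ) ≤ (N:ℝ) := by exact_mod_cast hN
    simp only [hb]; linarith
  have harg : ∀ q : ℕ, ((q * n + r + (n*N+1) : ℕ) : ℝ) / n + 1 = b + 1 + q := by
    intro q
    simp only [hb]
    push_cast
    field_simp
    ring
  have hexp : ∀ q : ℕ, q * n + r + (n*N+1) = (n*N + (r+1)) + n * q := fun q => by ring
  have hterm : ∀ q : ℕ, w ^ (q * n + r + (n*N+1)) /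
        (Real.Gamma (((q * n + r + (n*N+1) : ℕ) : ℝ) / n + 1) : ℂ)
      = w ^ (n*N + (r+1)) * ((w^n) ^ q / (Real.Gamma (b + 1 + q) : ℂ)) := by
    intro q
    rw [harg q, hexp q, pow_add, pow_mul]
    ring
  exact Summable.congr ((summable_inner_c (w^n) hb1).mul_left _) fun q => (hterm q).symm

lemma tail_repr {n N : ℕ} (hn : 1 ≤ n) (hN : 2 ≤ N) (w : ℂ) :
    ML n w - MLtrunc n N w
      = ∑ l ∈ Finset.Icc 1 n,
          w ^ (n*N + l) * ((Real.Gamma ((N:ℝ) + (l:ℝ)/n) : ℂ)⁻¹ *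
            ∫ t in (0:ℝ)..1,
              (((1 - t) ^ ((N:ℝ) + (l:ℝ)/n - 1) : ℝ) : ℂ) * Complex.exp (w^n * t)) := by
  haveI : NeZero n := ⟨by omega⟩
  set f : ℕ → ℂ := fun m => w ^ m / (Real.Gamma ((m:ℝ) / n + 1) : ℂ) with hf
  have hsum : Summable f := summable_ml hn w
  have hkey := Summable.sum_add_tsum_nat_add (f := f) (n*N+1) hsum
  have hsplit : ML n w - MLtrunc n N w = ∑' i : ℕ, f (i + (n*N+1)) := by
    rw [ML, MLtrunc, ← hkey]
    ring
  rw [hsplit]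
  have htail : Summable fun i : ℕ => f (i + (n*N+1)) := (summable_nat_add_iff _).mpr hsum
  set e3 : Fin n × ℕ ≃ ℕ := (Equiv.prodComm (Fin n) ℕ).trans (Nat.divModEquiv n).symm with he3
  have he3app : ∀ p : Fin n × ℕ, e3 p = p.2 * n + ↑p.1 := fun p => rfl
  have hsum3 : Summable fun p : Fin n × ℕ => f (e3 p + (n*N+1)) :=
    e3.summable_iff.mpr htail
  have heq3 := e3.tsum_eq (fun i => f (i + (n*N+1)))
  rw [← heq3]
  have hfib : ∀ r : Fin n, Summable fun q : ℕ => f (q * n + ↑r + (n*N+1)) :=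
    fun r => fiber_summable hn hN w ↑r
  have hsumH : Summable fun p : Fin n × ℕ => f (p.2 * n + ↑p.1 + (n*N+1)) :=
    hsum3.congr fun p => by rw [he3app p]
  calc (∑' p : Fin n × ℕ, f (e3 p + (n*N+1)))
      = ∑' p : Fin n × ℕ, f (p.2 * n + ↑p.1 + (n*N+1)) :=
        tsum_congr fun p => by rw [he3app p]
    _ = ∑' (r : Fin n), ∑' (q : ℕ), f (q * n + ↑r + (n*N+1)) := Summable.tsum_prod' hsumH hfib
    _ = ∑ r : Fin n, ∑' (q : ℕ), f (q * n + ↑r + (n*N+1)) := tsum_fintype _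
    _ = ∑ r : Fin n, (fun l : ℕ => w ^ (n*N + l) * ((Real.Gamma ((N:ℝ) + (l:ℝ)/n) : ℂ)⁻¹ *
            ∫ t in (0:ℝ)..1,
              (((1 - t) ^ ((N:ℝ) + (l:ℝ)/n - 1) : ℝ) : ℂ) * Complex.exp (w^n * t))) (↑r + 1) := by
        apply Finset.sum_congr rfl
        intro r _
        exact fiber_eq hn hN w ↑r
    _ = ∑ i ∈ Finset.range n, (fun l : ℕ => w ^ (n*N + l) *
            ((Real.Gamma ((N:ℝ) + (l:ℝ)/n) : ℂ)⁻¹ *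
            ∫ t in (0:ℝ)..1,
              (((1 - t) ^ ((N:ℝ) + (l:ℝ)/n - 1) : ℝ) : ℂ) * Complex.exp (w^n * t))) (i + 1) :=
        Fin.sum_univ_eq_sum_range (fun i => (fun l : ℕ => w ^ (n*N + l) *
            ((Real.Gamma ((N:ℝ) + (l:ℝ)/n) : ℂ)⁻¹ *
            ∫ t in (0:ℝ)..1,
              (((1 - t) ^ ((N:ℝ) + (l:ℝ)/n - 1) : ℝ) : ℂ) * Complex.exp (w^n * t))) (i + 1)) n
    _ = ∑ l ∈ Finset.Icc 1 n,
          w ^ (n*N + l) * ((Real.Gamma ((N:ℝ) + (l:ℝ)/n) : ℂ)⁻¹ *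
            ∫ t in (0:ℝ)..1,
              (((1 - t) ^ ((N:ℝ) + (l:ℝ)/n - 1) : ℝ) : ℂ) * Complex.exp (w^n * t)) := by
        rw [← Finset.Ico_add_one_right_eq_Icc, Finset.sum_Ico_eq_sum_range]
        simp only [Nat.add_sub_cancel]
        apply Finset.sum_congr rfl
        intro i _
        rw [Nat.add_comm 1 i]

lemma integral_bound {p : ℝ} (hp : 0 < p) (u : ℂ) :
    ‖∫ t in (0:ℝ)..1, (((1 - t) ^ p : ℝ) : ℂ) * Complex.exp (u * t)‖
      ≤ Real.exp |u.re| / (p + 1) := by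
  have hnormcont : Continuous fun t : ℝ => ((1 - t) ^ p : ℝ) * Real.exp |u.re| :=
    (cont_rpow p hp.le).mul continuous_const
  have h1 : ‖∫ t in (0:ℝ)..1, (((1 - t) ^ p : ℝ) : ℂ) * Complex.exp (u * t)‖
      ≤ ∫ t in (0:ℝ)..1, ‖(((1 - t) ^ p : ℝ) : ℂ) * Complex.exp (u * t)‖ :=
    intervalIntegral.norm_integral_le_integral_norm zero_le_one
  have h2 : (∫ t in (0:ℝ)..1, ‖(((1 - t) ^ p : ℝ) : ℂ) * Complex.exp (u * t)‖)
      ≤ ∫ t in (0:ℝ)..1, ((1 - t) ^ p : ℝ) * Real.exp |u.re| := by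
    apply intervalIntegral.integral_mono_on zero_le_one ?_
      (hnormcont.intervalIntegrable 0 1)
    · intro t ht
      have h1t : (0:ℝ) ≤ 1 - t := by linarith [ht.2]
      rw [norm_mul, Complex.norm_real, Real.norm_of_nonneg (Real.rpow_nonneg h1t _)]
      apply mul_le_mul_of_nonneg_left ?_ (Real.rpow_nonneg h1t _)
      rw [Complex.norm_exp]
      apply Real.exp_le_exp.mpr
      have he : (u * (t:ℂ)).re = u.re * t := by simp [Complex.mul_re]
      rw [he]
      calc u.re * t ≤ |u.re| * t := mul_le_mul_of_nonneg_right (le_abs_self _) ht.1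
        _ ≤ |u.re| * 1 := mul_le_mul_of_nonneg_left ht.2 (abs_nonneg _)
        _ = |u.re| := mul_one _
    · apply Continuous.intervalIntegrable
      apply Continuous.norm
      exact (Complex.continuous_ofReal.comp (cont_rpow p hp.le)).mul
        ((continuous_const.mul Complex.continuous_ofReal).cexp)
  have h3 : (∫ t in (0:ℝ)..1, ((1 - t) ^ p : ℝ) * Real.exp |u.re|)
      = Real.exp |u.re| / (p + 1) := by
    rw [intervalIntegral.integral_mul_const]
    have h4 : (∫ t in (0:ℝ)..1, ((1 - t) ^ p : ℝ)) = ∫ s in (0:ℝ)..1, (s ^ p : ℝ) := by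
      have h5 := intervalIntegral.integral_comp_sub_left (a := (0:ℝ)) (b := 1)
        (fun s : ℝ => (s ^ p : ℝ)) 1
      norm_num at h5
      exact h5
    rw [h4, integral_rpow (Or.inl (by linarith : (-1:ℝ) < p))]
    rw [Real.one_rpow, Real.zero_rpow (by linarith : p + 1 ≠ 0)]
    ring
  calc ‖∫ t in (0:ℝ)..1, (((1 - t) ^ p : ℝ) : ℂ) * Complex.exp (u * t)‖
      ≤ ∫ t in (0:ℝ)..1, ‖(((1 - t) ^ p : ℝ) : ℂ) * Complex.exp (u * t)‖ := h1
    _ ≤ ∫ t in (0:ℝ)..1, ((1 - t) ^ p : ℝ) * Real.exp |u.re| := h2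
    _ = Real.exp |u.re| / (p + 1) := h3

theorem mittagLeffler_tail_deriv_bound (n N : ℕ) (hn : 1 ≤ n) (hN : 2 ≤ N) (z : ℂ) :
    ∃ D : ℂ, HasDerivAt (fun w : ℂ => ML n w - MLtrunc n N w) D z ∧
      ‖D‖
        ≤ (n : ℝ) * ‖z‖ ^ (n - 1) *
            ((∑ l ∈ Finset.Icc 1 n,
                ‖z‖ ^ (n * (N - 1) + l) / Real.Gamma ((N : ℝ) + (l : ℝ) / n)) *
              Real.exp |(z ^ n).re|) := by
  obtain ⟨N', rfl⟩ : ∃ N', N = N' + 1 := ⟨N - 1, by omega⟩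
  have hN' : 1 ≤ N' := by omega
  refine ⟨(n:ℂ) * z ^ (n-1) * ∑ l ∈ Finset.Icc 1 n, z ^ (n * N' + l) *
    ((Real.Gamma ((((N'+1:ℕ)):ℝ) + (l:ℝ)/n - 1) : ℂ)⁻¹ *
      ∫ t in (0:ℝ)..1,
        (((1 - t) ^ ((((N'+1:ℕ)):ℝ) + (l:ℝ)/n - 2) : ℝ) : ℂ) * Complex.exp (z^n * t)), ?_, ?_⟩
  · have hfun : (fun w : ℂ => ML n w - MLtrunc n (N'+1) w)
        = fun w => ∑ l ∈ Finset.Icc 1 n,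
            w ^ (n*(N'+1) + l) * ((Real.Gamma ((((N'+1:ℕ)):ℝ) + (l:ℝ)/n) : ℂ)⁻¹ *
              ∫ t in (0:ℝ)..1,
                (((1 - t) ^ ((((N'+1:ℕ)):ℝ) + (l:ℝ)/n - 1) : ℝ) : ℂ) * Complex.exp (w^n * t)) :=
      funext fun w => tail_repr hn (by omega) w
    rw [hfun, Finset.mul_sum]
    apply HasDerivAt.fun_sum
    intro l hl
    have hl1 : 1 ≤ l := (Finset.mem_Icc.mp hl).1
    have hln : l ≤ n := (Finset.mem_Icc.mp hl).2
    have hb : 2 < (((N'+1:ℕ)):ℝ) + (l:ℝ)/n := by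
      have h2 : (2:ℝ) ≤ ((N'+1:ℕ):ℝ) := by exact_mod_cast (by omega : 2 ≤ N'+1)
      have h3 : (0:ℝ) < (l:ℝ)/n := by
        apply div_pos
        · exact_mod_cast hl1
        · exact_mod_cast hn
      linarith
    have hnb : ((n + (n * N' + l) : ℕ) : ℝ) = n * ((((N'+1:ℕ)):ℝ) + (l:ℝ)/n) := by
      have hn0 : (n:ℝ) ≠ 0 := Nat.cast_ne_zero.mpr (by omega)
      push_cast
      field_simp
      ring
    have hE : n * (N'+1) + l = n + (n * N' + l) := by ring
    rw [hE]
    exact deriv_piece n (n * N' + l) hn hb hnb z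
  · rw [norm_mul, norm_mul, Complex.norm_natCast, norm_pow]
    rw [mul_assoc, mul_assoc]
    apply mul_le_mul_of_nonneg_left ?_ (Nat.cast_nonneg n)
    apply mul_le_mul_of_nonneg_left ?_ (pow_nonneg (norm_nonneg z) _)
    calc ‖∑ l ∈ Finset.Icc 1 n, z ^ (n * N' + l) *
        ((Real.Gamma ((((N'+1:ℕ)):ℝ) + (l:ℝ)/n - 1) : ℂ)⁻¹ *
          ∫ t in (0:ℝ)..1,
            (((1 - t) ^ ((((N'+1:ℕ)):ℝ) + (l:ℝ)/n - 2) : ℝ) : ℂ) * Complex.exp (z^n * t))‖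
        ≤ ∑ l ∈ Finset.Icc 1 n, ‖z ^ (n * N' + l) *
          ((Real.Gamma ((((N'+1:ℕ)):ℝ) + (l:ℝ)/n - 1) : ℂ)⁻¹ *
            ∫ t in (0:ℝ)..1,
              (((1 - t) ^ ((((N'+1:ℕ)):ℝ) + (l:ℝ)/n - 2) : ℝ) : ℂ) * Complex.exp (z^n * t))‖ :=
          norm_sum_le _ _
      _ ≤ ∑ l ∈ Finset.Icc 1 n,
            ‖z‖ ^ (n * ((N'+1) - 1) + l) / Real.Gamma ((((N'+1:ℕ)):ℝ) + (l:ℝ)/n)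
              * Real.exp |(z^n).re| := by
          apply Finset.sum_le_sum
          intro l hl
          have hl1 : 1 ≤ l := (Finset.mem_Icc.mp hl).1
          set b : ℝ := (((N'+1:ℕ)):ℝ) + (l:ℝ)/n with hbdef
          have hb : 2 < b := by
            have h2 : (2:ℝ) ≤ ((N'+1:ℕ):ℝ) := by exact_mod_cast (by omega : 2 ≤ N'+1)
            have h3 : (0:ℝ) < (l:ℝ)/n := by
              apply div_pos
              · exact_mod_cast hl1
              · exact_mod_cast hn
            simp only [hbdef]; linarith
          have hΓ1pos : 0 < Real.Gamma (b - 1) := Real.Gamma_pos_of_pos (by linarith)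
          have hΓpos : 0 < Real.Gamma b := Real.Gamma_pos_of_pos (by linarith)
          have hΓrec : Real.Gamma b = (b - 1) * Real.Gamma (b - 1) := by
            have h5 := Real.Gamma_add_one (by linarith : b - 1 ≠ 0)
            rw [show b - 1 + 1 = b by ring] at h5
            exact h5
          have hM : n * ((N'+1) - 1) + l = n * N' + l := by simp
          rw [hM]
          have hIb := integral_bound (p := b - 2) (by linarith) (z^n)
          rw [show b - 2 + 1 = b - 1 by ring] at hIb
          rw [norm_mul, norm_mul, norm_pow, norm_inv, Complex.norm_real,
            Real.norm_of_nonneg hΓ1pos.le]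
          calc ‖z‖ ^ (n * N' + l) * ((Real.Gamma (b-1))⁻¹ *
              ‖∫ t in (0:ℝ)..1, (((1 - t) ^ (b - 2) : ℝ) : ℂ) * Complex.exp (z^n * t)‖)
              ≤ ‖z‖ ^ (n * N' + l) * ((Real.Gamma (b-1))⁻¹ * (Real.exp |(z^n).re| / (b - 1))) := by
                apply mul_le_mul_of_nonneg_left ?_ (pow_nonneg (norm_nonneg z) _)
                apply mul_le_mul_of_nonneg_left hIb (by positivity)
            _ = ‖z‖ ^ (n * N' + l) / Real.Gamma b * Real.exp |(z^n).re| := by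
                have hb1 : b - 1 ≠ 0 := by linarith
                have hstep : (Real.Gamma (b-1))⁻¹ * (Real.exp |(z^n).re| / (b - 1))
                    = Real.exp |(z^n).re| / ((b-1) * Real.Gamma (b-1)) := by
                  field_simp
                rw [hstep, hΓrec]
                ring
      _ = (∑ l ∈ Finset.Icc 1 n,
            ‖z‖ ^ (n * ((N'+1) - 1) + l) / Real.Gamma ((((N'+1:ℕ)):ℝ) + (l:ℝ)/n))
              * Real.exp |(z^n).re| := by
          rw [Finset.sum_mul]
end
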